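/- In ℝ³, with Y_{k,1}^n(x) = r^{n−k} C_{n−k}^{k+1/2}(x₃/r) ρ^k T_k(x₂/ρ) and Y_{k,2}^n(x) = r^{n−k} C_{n−k}^{k+1/2}(x₃/r) ρ^{k−1} x₁ U_{k−1}(x₂/ρ), where ρ = √(x₁²+x₂²), r = ‖x‖, one has for 1 ≤ k ≤ n: ∂₂ Y_{k,1}^n(x) = ((n+k)(n+k−1)/(2(2k−1))) Y_{k−1,1}^{n−1}(x) − (k+1/2) Y_{k+1,1}^{n−1}(x), with the convention Y_{k,1}^m = 0 for k > m. -/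

import Mathlib

open scoped BigOperators
open MeasureTheory

noncomputable def poch (a : ℝ) (n : ℕ) : ℝ := ∏ i ∈ Finset.range n, (a + i)

noncomputable def gegenbauer (n : ℕ) (lam t : ℝ) : ℝ :=
  ∑ k ∈ Finset.range (n / 2 + 1),
    (-1 : ℝ) ^ k * poch lam (n - k) /
      ((Nat.factorial k : ℝ) * (Nat.factorial (n - 2 * k) : ℝ)) * (2 * t) ^ (n - 2 * k)

noncomputable def jacobi (j : ℕ) (a b t : ℝ) : ℝ :=
  poch (a + 1) j / (Nat.factorial j : ℝ) *
    ∑ k ∈ Finset.range (j + 1),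
      poch (-(j : ℝ)) k * poch ((j : ℝ) + a + b + 1) k /
        (poch (a + 1) k * (Nat.factorial k : ℝ)) * ((1 - t) / 2) ^ k

noncomputable def pd {d : ℕ} (i : Fin d) (f : EuclideanSpace ℝ (Fin d) → ℝ)
    (x : EuclideanSpace ℝ (Fin d)) : ℝ :=
  fderiv ℝ f x (EuclideanSpace.single i 1)

noncomputable def lap {d : ℕ} (f : EuclideanSpace ℝ (Fin d) → ℝ)
    (x : EuclideanSpace ℝ (Fin d)) : ℝ :=
  ∑ i, pd i (pd i f) x

noncomputable def Dang {d : ℕ} (i j : Fin d) (f : EuclideanSpace ℝ (Fin d) → ℝ)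
    (x : EuclideanSpace ℝ (Fin d)) : ℝ :=
  x i * pd j f x - x j * pd i f x

noncomputable def lapS {d : ℕ} (f : EuclideanSpace ℝ (Fin d) → ℝ)
    (x : EuclideanSpace ℝ (Fin d)) : ℝ :=
  ∑ p ∈ Finset.univ.filter (fun p : Fin d × Fin d => p.1 < p.2),
    Dang p.1 p.2 (Dang p.1 p.2 f) x

noncomputable def chebT (k : ℕ) (t : ℝ) : ℝ := (Polynomial.Chebyshev.T ℝ (k : ℤ)).eval t

noncomputable def rho (x : EuclideanSpace ℝ (Fin 3)) : ℝ := Real.sqrt ((x 0) ^ 2 + (x 1) ^ 2)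

/-- `Y_{k,1}^m(x) = r^{m-k} C_{m-k}^{k+1/2}(x₃/r) ρ^k T_k(x₂/ρ)`, with the convention
`Y_{k,1}^m = 0` for `k > m`. -/
noncomputable def Y31 (k m : ℕ) (x : EuclideanSpace ℝ (Fin 3)) : ℝ :=
  if k ≤ m then
    ‖x‖ ^ (m - k) * gegenbauer (m - k) ((k : ℝ) + 1 / 2) (x 2 / ‖x‖) *
      rho x ^ k * chebT k (x 1 / rho x)
  else 0

lemma poch_succ_left (a : ℝ) (n : ℕ) : poch a (n+1) = a * poch (a+1) n := by
  unfold poch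
  rw [Finset.prod_range_succ']
  rw [Nat.cast_zero, add_zero, mul_comm]
  congr 1
  apply Finset.prod_congr rfl
  intro i _
  push_cast
  ring

lemma poch_succ_right (a : ℝ) (n : ℕ) : poch a (n+1) = poch a n * (a + n) := by
  unfold poch
  rw [Finset.prod_range_succ]

lemma chebT_zero (t : ℝ) : chebT 0 t = 1 := by
  simp [chebT, Polynomial.Chebyshev.T_zero]

lemma chebT_one (t : ℝ) : chebT 1 t = t := by
  simp [chebT, Polynomial.Chebyshev.T_one]

lemma chebT_add_two (k : ℕ) (t : ℝ) :
    chebT (k+2) t = 2 * t * chebT (k+1) t - chebT k t := by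
  unfold chebT
  have h : ((k+2 : ℕ) : ℤ) = (k : ℤ) + 2 := by push_cast; ring
  rw [h, Polynomial.Chebyshev.T_add_two]
  push_cast
  simp [Polynomial.eval_mul, Polynomial.eval_sub]

noncomputable def Qc : ℕ → ℝ → ℝ → ℝ
  | 0, _, _ => 1
  | 1, _, b => b
  | (k+2), a, b => 2 * b * Qc (k+1) a b - (a^2 + b^2) * Qc k a b

lemma Qc_cheb (k : ℕ) (a b : ℝ) (h : a^2 + b^2 ≠ 0) :
    (Real.sqrt (a^2+b^2))^k * chebT k (b / Real.sqrt (a^2+b^2)) = Qc k a b := by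
  have hpos : 0 < a^2 + b^2 := lt_of_le_of_ne (by positivity) (Ne.symm h)
  have hs : Real.sqrt (a^2+b^2) ≠ 0 := by
    rw [Real.sqrt_ne_zero']; exact hpos
  have hsq : (Real.sqrt (a^2+b^2))^2 = a^2 + b^2 := Real.sq_sqrt hpos.le
  induction k using Nat.twoStepInduction with
  | zero => simp [chebT_zero, Qc]
  | one => simp [chebT_one, Qc]; field_simp
  | more k ih1 ih2 =>
    rw [chebT_add_two]
    show _ = 2 * b * Qc (k+1) a b - (a^2 + b^2) * Qc k a b
    rw [← ih1, ← ih2]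
    set s := Real.sqrt (a^2+b^2) with hsdef
    set T0 := chebT k (b / s) with hT0
    set T1 := chebT (k+1) (b / s) with hT1
    have hb : b / s * s = b := div_mul_cancel₀ b hs
    linear_combination (2 * s^(k+1) * T1) * hb - (s^k * T0) * hsq

lemma Qc_hasDerivAt (k : ℕ) (a b : ℝ) :
    HasDerivAt (fun y => Qc k a y) ((k : ℝ) * Qc (k-1) a b) b := by
  induction k using Nat.twoStepInduction generalizing b with
  | zero => simp only [Qc, Nat.cast_zero, zero_mul]; exact hasDerivAt_const b 1
  | one =>
    simp only [Nat.cast_one, one_mul]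
    have h0 : (1:ℕ) - 1 = 0 := rfl
    rw [h0]
    show HasDerivAt (fun y => Qc 1 a y) (Qc 0 a b) b
    show HasDerivAt (fun y => y) (Qc 0 a b) b
    show HasDerivAt (fun y => y) (1:ℝ) b
    exact hasDerivAt_id b
  | more k ih1 ih2 =>
    show HasDerivAt (fun y => 2 * y * Qc (k+1) a y - (a^2 + y^2) * Qc k a y) _ b
    have h1 : HasDerivAt (fun y : ℝ => 2 * y * Qc (k+1) a y)
        (2 * 1 * Qc (k+1) a b + 2 * b * (((k+1 : ℕ) : ℝ) * Qc ((k+1)-1) a b)) b := by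
      exact (((hasDerivAt_id b).const_mul (2:ℝ)).mul (ih2 b))
    have ha : HasDerivAt (fun y : ℝ => a^2 + y^2) (2*b) b := by
      simpa using ((hasDerivAt_pow 2 b).const_add (a^2))
    have h2 : HasDerivAt (fun y : ℝ => (a^2 + y^2) * Qc k a y)
        (2 * b * Qc k a b + (a^2 + b^2) * ((k : ℝ) * Qc (k-1) a b)) b :=
      ha.mul (ih1 b)
    have := h1.sub h2
    convert this using 1
    · rfl
    · rfl
    · rfl
    have hQ : ((k+2:ℕ) - 1 : ℕ) = k + 1 := rfl
    rw [hQ, Nat.add_sub_cancel]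
    match k with
    | 0 => simp [Qc]
    | (k'+1) =>
      have hQ1 : Qc (k'+1+1) a b = 2*b*Qc (k'+1) a b - (a^2+b^2)*Qc k' a b := rfl
      have hQ2 : (k'+1) - 1 = k' := rfl
      rw [hQ2, hQ1]
      push_cast
      ring

noncomputable def gcoef (m : ℕ) (lam : ℝ) (j : ℕ) : ℝ :=
  (-1 : ℝ) ^ j * poch lam (m - j) / ((Nat.factorial j : ℝ) * (Nat.factorial (m - 2 * j) : ℝ))

noncomputable def Pg (m : ℕ) (lam c q : ℝ) : ℝ :=
  ∑ j ∈ Finset.range (m / 2 + 1), gcoef m lam j * (2 * c) ^ (m - 2 * j) * q ^ j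

noncomputable def PgD (m : ℕ) (lam c q : ℝ) : ℝ :=
  ∑ j ∈ Finset.range (m / 2 + 1), gcoef m lam j * (2 * c) ^ (m - 2 * j) * ((j : ℝ) * q ^ (j - 1))

lemma fact_ne (i : ℕ) : ((Nat.factorial i : ℝ)) ≠ 0 :=
  Nat.cast_ne_zero.mpr (Nat.factorial_ne_zero i)

lemma PgD_zero (m : ℕ) (hm : m ≤ 1) (lam c q : ℝ) : PgD m lam c q = 0 := by
  have h : m / 2 = 0 := by omega
  rw [PgD, h]
  simp

lemma PgD_eq (m : ℕ) (lam c q : ℝ) : PgD (m+2) lam c q = -lam * Pg m (lam+1) c q := by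
  rw [PgD, Pg]
  have hdiv : (m+2)/2 = m/2 + 1 := by omega
  rw [hdiv, Finset.sum_range_succ']
  simp only [Nat.cast_zero, zero_mul, mul_zero, add_zero]
  rw [Finset.mul_sum]
  apply Finset.sum_congr rfl
  intro i hi
  have hi' : 2 * i ≤ m := by
    have := Finset.mem_range.mp hi; omega
  have e1 : (m+2) - (i+1) = (m - i) + 1 := by omega
  have e2 : (m+2) - 2*(i+1) = m - 2*i := by omega
  have e3 : (i+1) - 1 = i := by omega
  unfold gcoef
  rw [e1, e2, e3, poch_succ_left lam (m-i), Nat.factorial_succ]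
  have f1 := fact_ne i
  have f2 := fact_ne (m - 2*i)
  push_cast
  field_simp
  ring

lemma coeff_inner (m k j : ℕ) (hk : 1 ≤ k) (hj : j < m / 2) :
    ((k:ℝ) + j) * gcoef m ((k:ℝ)+1/2) j - ((j:ℝ)+1)/4 * gcoef m ((k:ℝ)+1/2) (j+1)
      = ((m:ℝ)+2*k) * ((m:ℝ)+2*k-1) / (2*(2*(k:ℝ)-1)) * gcoef m ((k:ℝ)-1/2) j := by
  obtain ⟨e, he⟩ : ∃ e, m = 2*j + e + 2 := ⟨m - 2*j - 2, by omega⟩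
  have d1 : m - j = (j+e+1)+1 := by omega
  have d2 : m - 2*j = e+2 := by omega
  have d3 : m - (j+1) = j+e+1 := by omega
  have d4 : m - 2*(j+1) = e := by omega
  have hm : (m:ℝ) = 2*(j:ℝ)+(e:ℝ)+2 := by rw [he]; push_cast; ring
  have hk2 : (2*(k:ℝ)-1) ≠ 0 := by
    have h1 : (1:ℝ) ≤ (k:ℝ) := by exact_mod_cast hk
    nlinarith
  have hk2' : (k:ℝ)*2-1 ≠ 0 := by rw [mul_comm]; exact hk2
  unfold gcoef
  rw [d1, d2, d3, d4, hm]
  rw [poch_succ_right ((k:ℝ)+1/2) (j+e+1)]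
  rw [show ((k:ℝ)-1/2) = ((k:ℝ)+1/2) - 1 by ring, poch_succ_left (((k:ℝ)+1/2)-1) (j+e+1)]
  rw [show ((k:ℝ)+1/2-1+1) = ((k:ℝ)+1/2) by ring]
  set p := poch ((k:ℝ)+1/2) (j+e+1) with hp
  rw [Nat.factorial_succ j, Nat.factorial_succ (e+1), Nat.factorial_succ e]
  have f1 := fact_ne j
  have f2 := fact_ne e
  push_cast
  field_simp
  ring

lemma coeff_top (m k j : ℕ) (hk : 1 ≤ k) (hj1 : 2*j ≤ m) (hj2 : m ≤ 2*j+1) :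
    ((k:ℝ) + j) * gcoef m ((k:ℝ)+1/2) j
      = ((m:ℝ)+2*k) * ((m:ℝ)+2*k-1) / (2*(2*(k:ℝ)-1)) * gcoef m ((k:ℝ)-1/2) j := by
  have hk2 : (2*(k:ℝ)-1) ≠ 0 := by
    have h1 : (1:ℝ) ≤ (k:ℝ) := by exact_mod_cast hk
    nlinarith
  have hk2' : (k:ℝ)*2-1 ≠ 0 := by rw [mul_comm]; exact hk2
  have f1 := fact_ne j
  rcases Nat.eq_or_lt_of_le hj1 with hd | hd
  · -- m = 2*j
    rcases Nat.eq_zero_or_pos j with hj0 | hj0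
    · subst hj0
      have : m = 0 := by omega
      subst this
      unfold gcoef
      simp [poch]
      field_simp
    · obtain ⟨j', rfl⟩ : ∃ j', j = j'+1 := ⟨j-1, by omega⟩
      have d1 : m - (j'+1) = j'+1 := by omega
      have d2 : m - 2*(j'+1) = 0 := by omega
      have hm : (m:ℝ) = 2*((j':ℝ)+1) := by
        have : m = 2*(j'+1) := by omega
        rw [this]; push_cast; ring
      unfold gcoef
      rw [d1, d2, hm]
      rw [poch_succ_right ((k:ℝ)+1/2) j']
      rw [show ((k:ℝ)-1/2) = ((k:ℝ)+1/2) - 1 by ring, poch_succ_left (((k:ℝ)+1/2)-1) j']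
      rw [show ((k:ℝ)+1/2-1+1) = ((k:ℝ)+1/2) by ring]
      rw [Nat.factorial_succ j']
      have f2 := fact_ne j'
      push_cast
      field_simp
      ring
  · -- m = 2*j+1
    have hm' : m = 2*j+1 := by omega
    have d1 : m - j = j+1 := by omega
    have d2 : m - 2*j = 1 := by omega
    have hm : (m:ℝ) = 2*(j:ℝ)+1 := by rw [hm']; push_cast; ring
    unfold gcoef
    rw [d1, d2, hm]
    rw [poch_succ_right ((k:ℝ)+1/2) j]
    rw [show ((k:ℝ)-1/2) = ((k:ℝ)+1/2) - 1 by ring, poch_succ_left (((k:ℝ)+1/2)-1) j]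
    rw [show ((k:ℝ)+1/2-1+1) = ((k:ℝ)+1/2) by ring]
    push_cast
    field_simp
    ring

lemma mainId (m k : ℕ) (hk : 1 ≤ k) (c q : ℝ) :
    (k:ℝ) * Pg m ((k:ℝ)+1/2) c q + (q - c^2) * PgD m ((k:ℝ)+1/2) c q
      = ((m:ℝ)+2*k) * ((m:ℝ)+2*k-1) / (2*(2*(k:ℝ)-1)) * Pg m ((k:ℝ)-1/2) c q := by
  set lam := (k:ℝ)+1/2 with hlam
  set A := ((m:ℝ)+2*k) * ((m:ℝ)+2*k-1) / (2*(2*(k:ℝ)-1)) with hA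
  have h1 : (k:ℝ) * Pg m lam c q + q * PgD m lam c q
      = ∑ j ∈ Finset.range (m/2+1),
          gcoef m lam j * (2*c)^(m-2*j) * (((k:ℝ)+j) * q^j) := by
    rw [Pg, PgD, Finset.mul_sum, Finset.mul_sum, ← Finset.sum_add_distrib]
    apply Finset.sum_congr rfl
    intro j _
    rcases j with _ | i
    · simp; ring
    · simp only [Nat.add_sub_cancel]
      push_cast
      ring
  have h2 : c^2 * PgD m lam c q
      = ∑ i ∈ Finset.range (m/2),
          gcoef m lam (i+1) * (2*c)^(m-2*i) * ((((i:ℝ)+1))/4 * q^i) := by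
    rw [PgD, Finset.mul_sum, Finset.sum_range_succ']
    simp only [Nat.cast_zero, zero_mul, mul_zero, add_zero]
    apply Finset.sum_congr rfl
    intro i hi
    have hi' : 2*(i+1) ≤ m := by
      have := Finset.mem_range.mp hi; omega
    have he : m - 2*i = (m - 2*(i+1)) + 2 := by omega
    have e3 : (i+1) - 1 = i := by omega
    rw [he, pow_add, e3]
    push_cast
    ring
  have hLHS : (k:ℝ) * Pg m lam c q + (q - c^2) * PgD m lam c q
      = ((k:ℝ) * Pg m lam c q + q * PgD m lam c q) - c^2 * PgD m lam c q := by ring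
  rw [hLHS, h1, h2]
  have hRHS : A * Pg m ((k:ℝ)-1/2) c q
      = ∑ j ∈ Finset.range (m/2+1),
          A * (gcoef m ((k:ℝ)-1/2) j * (2*c)^(m-2*j) * q^j) := by
    rw [Pg, Finset.mul_sum]
  rw [hRHS]
  rw [Finset.sum_range_succ, Finset.sum_range_succ (fun j => A * (gcoef m ((k:ℝ)-1/2) j * (2*c)^(m-2*j) * q^j))]
  have htop : gcoef m lam (m/2) * (2*c)^(m-2*(m/2)) * (((k:ℝ)+(m/2 : ℕ)) * q^(m/2))
      = A * (gcoef m ((k:ℝ)-1/2) (m/2) * (2*c)^(m-2*(m/2)) * q^(m/2)) := by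
    have := coeff_top m k (m/2) hk (by omega) (by omega)
    rw [hA, hlam] at *
    linear_combination ((2*c)^(m-2*(m/2)) * q^(m/2)) * this
  have hsum : ∑ j ∈ Finset.range (m/2),
      (gcoef m lam j * (2*c)^(m-2*j) * (((k:ℝ)+j) * q^j)
        - gcoef m lam (j+1) * (2*c)^(m-2*j) * (((j:ℝ)+1)/4 * q^j))
      = ∑ j ∈ Finset.range (m/2), A * (gcoef m ((k:ℝ)-1/2) j * (2*c)^(m-2*j) * q^j) := by
    apply Finset.sum_congr rfl
    intro j hj
    have := coeff_inner m k j hk (Finset.mem_range.mp hj)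
    rw [hA, hlam]
    linear_combination ((2*c)^(m-2*j) * q^j) * this
  have key : (∑ j ∈ Finset.range (m/2), gcoef m lam j * (2*c)^(m-2*j) * (((k:ℝ)+j) * q^j))
      - (∑ j ∈ Finset.range (m/2), gcoef m lam (j+1) * (2*c)^(m-2*j) * (((j:ℝ)+1)/4 * q^j))
      = ∑ j ∈ Finset.range (m/2), A * (gcoef m ((k:ℝ)-1/2) j * (2*c)^(m-2*j) * q^j) := by
    rw [← Finset.sum_sub_distrib]
    exact hsum
  linear_combination key + htop

lemma Pg_geg (m : ℕ) (lam c r : ℝ) (hr : r ≠ 0) :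
    r^m * gegenbauer m lam (c/r) = Pg m lam c (r^2) := by
  rw [gegenbauer, Pg, Finset.mul_sum]
  apply Finset.sum_congr rfl
  intro j hj
  have h2j : 2*j ≤ m := by have := Finset.mem_range.mp hj; omega
  have e1 : (2*(c/r))^(m-2*j) = (2*c)^(m-2*j) / r^(m-2*j) := by
    rw [← mul_div_assoc, div_pow]
  have e2 : (r^2)^j = r^(2*j) := by rw [← pow_mul]
  have e3 : r^m = r^(m-2*j) * r^(2*j) := by rw [← pow_add]; congr 1; omega
  rw [e1, e2, e3, gcoef]
  have hrn : r^(m-2*j) ≠ 0 := pow_ne_zero _ hr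
  field_simp

lemma Pg_hasDerivAt (m : ℕ) (lam a b c : ℝ) :
    HasDerivAt (fun y : ℝ => Pg m lam c (a^2+y^2+c^2))
      (2*b*PgD m lam c (a^2+b^2+c^2)) b := by
  have hq : HasDerivAt (fun y : ℝ => a^2+y^2+c^2) (2*b) b := by
    simpa using (((hasDerivAt_pow 2 b).const_add (a^2)).add_const (c^2))
  have h : HasDerivAt (fun y : ℝ => Pg m lam c (a^2+y^2+c^2))
      (∑ j ∈ Finset.range (m/2+1),
        gcoef m lam j * (2*c)^(m-2*j) * ((j:ℝ) * (a^2+b^2+c^2)^(j-1) * (2*b))) b := by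
    unfold Pg
    apply HasDerivAt.fun_sum
    intro j _
    exact (hq.pow j).const_mul (gcoef m lam j * (2*c)^(m-2*j))
  convert h using 1
  rw [PgD, Finset.mul_sum]
  apply Finset.sum_congr rfl
  intro j _
  ring

lemma Qc_diff (k : ℕ) :
    Differentiable ℝ (fun y : EuclideanSpace ℝ (Fin 3) => Qc k (y 0) (y 1)) := by
  have hc : ∀ i : Fin 3, Differentiable ℝ (fun y : EuclideanSpace ℝ (Fin 3) => y i) :=
    fun i => by fun_prop
  induction k using Nat.twoStepInduction with
  | zero => exact differentiable_const 1
  | one => exact hc 1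
  | more k ih1 ih2 =>
    show Differentiable ℝ (fun y : EuclideanSpace ℝ (Fin 3) =>
      2 * y 1 * Qc (k+1) (y 0) (y 1) - ((y 0)^2 + (y 1)^2) * Qc k (y 0) (y 1))
    exact ((((hc 1).const_mul 2).mul ih2).sub ((((hc 0).pow 2).add ((hc 1).pow 2)).mul ih1))

lemma F_diff (m k : ℕ) (lam : ℝ) :
    Differentiable ℝ (fun y : EuclideanSpace ℝ (Fin 3) =>
      Pg m lam (y 2) ((y 0)^2+(y 1)^2+(y 2)^2) * Qc k (y 0) (y 1)) := by
  have hc : ∀ i : Fin 3, Differentiable ℝ (fun y : EuclideanSpace ℝ (Fin 3) => y i) :=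
    fun i => by fun_prop
  apply Differentiable.mul _ (Qc_diff k)
  unfold Pg
  apply Differentiable.fun_sum
  intro j _
  exact ((((hc 2).const_mul 2).pow (m-2*j)).const_mul (gcoef m lam j)).mul
    (Differentiable.pow ((((hc 0).pow 2).add ((hc 1).pow 2)).add ((hc 2).pow 2)) j)

lemma Y31_eq (K M : ℕ) (hKM : K ≤ M) (y : EuclideanSpace ℝ (Fin 3))
    (hy : (y 0)^2 + (y 1)^2 ≠ 0) :
    Y31 K M y = Pg (M-K) ((K:ℝ)+1/2) (y 2) ((y 0)^2+(y 1)^2+(y 2)^2) * Qc K (y 0) (y 1) := by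
  rw [Y31, if_pos hKM]
  have hr2 : ‖y‖^2 = (y 0)^2+(y 1)^2+(y 2)^2 := by
    rw [EuclideanSpace.norm_eq, Real.sq_sqrt (by positivity)]
    simp [Fin.sum_univ_three, Real.norm_eq_abs, sq_abs]
  have hpos : 0 < (y 0)^2 + (y 1)^2 := lt_of_le_of_ne (by positivity) (Ne.symm hy)
  have hrne : ‖y‖ ≠ 0 := by
    intro h0
    rw [h0] at hr2
    simp at hr2
    nlinarith [sq_nonneg (y 2)]
  have hrho : rho y = Real.sqrt ((y 0)^2+(y 1)^2) := rfl
  rw [hrho, mul_assoc, Qc_cheb K (y 0) (y 1) hy, Pg_geg (M-K) _ (y 2) ‖y‖ hrne, hr2]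


/-- `∂₂ Y_{k,1}^n = ((n+k)(n+k-1)/(2(2k-1))) Y_{k-1,1}^{n-1} - (k+1/2) Y_{k+1,1}^{n-1}`
for `1 ≤ k ≤ n`, with the convention `Y_{k,1}^m = 0` for `k > m`. -/
theorem stmt15 (n k : ℕ) (hk1 : 1 ≤ k) (hkn : k ≤ n) (x : EuclideanSpace ℝ (Fin 3))
    (hx : (x 0) ^ 2 + (x 1) ^ 2 ≠ 0) :
    pd (1 : Fin 3) (Y31 k n) x
      = ((n : ℝ) + k) * ((n : ℝ) + k - 1) / (2 * (2 * (k : ℝ) - 1)) * Y31 (k - 1) (n - 1) x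
        - ((k : ℝ) + 1 / 2) * Y31 (k + 1) (n - 1) x := by
  have hn1 : 1 ≤ n := le_trans hk1 hkn
  set a := x 0 with ha
  set b := x 1 with hb
  set c := x 2 with hc
  set m := n - k with hm
  set lam := (k:ℝ) + 1/2 with hlam
  set F : EuclideanSpace ℝ (Fin 3) → ℝ :=
    fun y => Pg m lam (y 2) ((y 0)^2+(y 1)^2+(y 2)^2) * Qc k (y 0) (y 1) with hF
  have hcont : Continuous (fun y : EuclideanSpace ℝ (Fin 3) => (y 0)^2 + (y 1)^2) :=
    ((EuclideanSpace.proj (0:Fin 3)).continuous.pow 2).add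
      ((EuclideanSpace.proj (1:Fin 3)).continuous.pow 2)
  have hU : IsOpen {y : EuclideanSpace ℝ (Fin 3) | (y 0)^2 + (y 1)^2 ≠ 0} :=
    isOpen_compl_singleton.preimage hcont
  have hev : Y31 k n =ᶠ[nhds x] F := by
    filter_upwards [hU.mem_nhds hx] with y hy
    rw [Y31_eq k n hkn y hy]
  set v := EuclideanSpace.single (1 : Fin 3) (1:ℝ) with hv
  have e1 : pd 1 (Y31 k n) x = fderiv ℝ F x v := by
    rw [pd, Filter.EventuallyEq.fderiv_eq hev]
  have hFd : HasFDerivAt F (fderiv ℝ F x) x := (F_diff m k lam x).hasFDerivAt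
  have hline : HasDerivAt (fun t : ℝ => x + t • v) v 0 := by
    simpa using ((hasDerivAt_id (0:ℝ)).smul_const v).const_add x
  have hFd' : HasFDerivAt F (fderiv ℝ F x) ((fun t : ℝ => x + t • v) 0) := by
    simpa using hFd
  have hcomp : HasDerivAt (F ∘ fun t : ℝ => x + t • v) (fderiv ℝ F x v) 0 :=
    hFd'.comp_hasDerivAt 0 hline
  have hco0 : ∀ t : ℝ, (x + t • v) 0 = a := by
    intro t
    simp [hv, PiLp.add_apply, PiLp.smul_apply, EuclideanSpace.single_apply, ha]
  have hco1 : ∀ t : ℝ, (x + t • v) 1 = b + t := by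
    intro t
    simp [hv, PiLp.add_apply, PiLp.smul_apply, EuclideanSpace.single_apply, hb]
  have hco2 : ∀ t : ℝ, (x + t • v) 2 = c := by
    intro t
    simp [hv, PiLp.add_apply, PiLp.smul_apply, EuclideanSpace.single_apply, hc]
  have hfun : (F ∘ fun t : ℝ => x + t • v)
      = fun t => Pg m lam c (a^2+(b+t)^2+c^2) * Qc k a (b+t) := by
    funext t
    simp only [Function.comp_apply, hF]
    rw [hco0 t, hco1 t, hco2 t]
  rw [hfun] at hcomp
  set q : ℝ := a^2+b^2+c^2 with hq
  set g' : ℝ := 2*b*PgD m lam c q * Qc k a b + Pg m lam c q * ((k:ℝ) * Qc (k-1) a b) with hg'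
  have hG : HasDerivAt (fun y : ℝ => Pg m lam c (a^2+y^2+c^2) * Qc k a y) g' b :=
    (Pg_hasDerivAt m lam a b c).mul (Qc_hasDerivAt k a b)
  have h2 : HasDerivAt (fun t : ℝ => b + t) 1 0 := by
    simpa using (hasDerivAt_id (0:ℝ)).const_add b
  have hGline : HasDerivAt (fun t : ℝ => Pg m lam c (a^2+(b+t)^2+c^2) * Qc k a (b+t)) g' 0 := by
    have hcc := HasDerivAt.comp (0:ℝ) (by simpa using hG) h2
    simp only [Function.comp_def, mul_one] at hcc
    exact hcc
  have hval : fderiv ℝ F x v = g' := hcomp.unique hGline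
  have hY1 : Y31 (k-1) (n-1) x = Pg m ((k:ℝ)-1/2) c q * Qc (k-1) a b := by
    rw [Y31_eq (k-1) (n-1) (by omega) x hx]
    have h1 : (n-1)-(k-1) = m := by omega
    have h2 : ((k-1:ℕ):ℝ)+1/2 = (k:ℝ)-1/2 := by
      rw [Nat.cast_sub hk1]; push_cast; ring
    rw [h1, h2]
  have hrec : 2*b*Qc k a b = Qc (k+1) a b + (a^2+b^2) * Qc (k-1) a b := by
    obtain ⟨k', rfl⟩ : ∃ k', k = k'+1 := ⟨k-1, by omega⟩
    show _ = (2*b*Qc (k'+1) a b - (a^2+b^2)*Qc k' a b) + (a^2+b^2) * Qc ((k'+1)-1) a b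
    rw [Nat.add_sub_cancel]
    ring
  have hmain := mainId m k hk1 c q
  have hcast : ((m:ℝ)+2*(k:ℝ)) = (n:ℝ)+(k:ℝ) := by
    rw [hm, Nat.cast_sub hkn]; ring
  rw [hcast] at hmain
  have hY2 : ((k:ℝ)+1/2) * Y31 (k+1) (n-1) x = -(PgD m lam c q * Qc (k+1) a b) := by
    by_cases h2m : 2 ≤ m
    · obtain ⟨m', hm2⟩ : ∃ m', m = m'+2 := ⟨m-2, by omega⟩
      rw [Y31_eq (k+1) (n-1) (by omega) x hx]
      have h1 : (n-1)-(k+1) = m' := by omega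
      have h3 : ((k+1:ℕ):ℝ)+1/2 = lam+1 := by rw [hlam]; push_cast; ring
      rw [h1, h3, hm2, PgD_eq m' lam c q, hlam]
      ring
    · have hno : ¬(k+1 ≤ n-1) := by omega
      rw [Y31, if_neg hno, PgD_zero m (by omega)]
      simp
  rw [e1, hval, hg', hY1]
  linear_combination (PgD m lam c q) * hrec + (Qc (k-1) a b) * hmain + hY2
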